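/- For a real parameter m\ne 0, define functions Q_p(u,w) for complex u\in\mathbb{C}\setminus\{0,i,-i\} and w\ne u recursively by Q_0(u,w)=1/(u-w) and Q_{p+1}(u,w) = \frac{1}{m}\Big(1+\frac{1}{u^2}\Big)^{-1}\Big(\frac{Q_p(u,w)}{u} + \frac{\partial}{\partial u}Q_p(u,w)\Big). Then for every p\ge 1 there exist constants q_{p,i,j} (0\le i\le p-1, 0\le j\le \min over the stated range, namely 0\le j\le p-i), independent of m, u and w, such that Q_p(u,w) = \frac{1}{(2m)^p}\sum_{i=0}^{p-1}\sum_{j=0}^{p-i} q_{p,i,j}\,\Big(\frac{1}{1+u^2}\Big)^{p+i} u^{2p+i-j}\Big(\frac{1}{u-w}\Big)^{p+1-i-j} for all u\in\mathbb{C}\setminus\{0,i,-i\} and all w\ne u. -/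

import Mathlib

/-- The functions `Q_p(u,w)` of equation (101) of the paper. -/
noncomputable def Qfun (m : ℝ) : ℕ → ℂ → ℂ → ℂ
  | 0 => fun u w => 1 / (u - w)
  | p + 1 => fun u w =>
      (1 / (m : ℂ)) * (1 + 1 / u ^ 2)⁻¹ *
        (Qfun m p u w / u + deriv (fun z => Qfun m p z w) u)

open Finset
noncomputable def Dbase (a b c : ℕ) (u w : ℂ) : ℂ :=
  ((a : ℂ) * ((1 + u ^ 2)⁻¹) ^ (a - 1) * (-(2 * u) / (1 + u ^ 2) ^ 2) * u ^ b
      + ((1 + u ^ 2)⁻¹) ^ a * ((b : ℂ) * u ^ (b - 1))) * ((u - w)⁻¹) ^ c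
    + ((1 + u ^ 2)⁻¹) ^ a * u ^ b * ((c : ℂ) * ((u - w)⁻¹) ^ (c - 1) * (-1 / (u - w) ^ 2))

lemma hasDerivAt_base (a b c : ℕ) (u w : ℂ) (h1 : 1 + u ^ 2 ≠ 0) (h2 : u - w ≠ 0) :
    HasDerivAt (fun z : ℂ => (1 / (1 + z ^ 2)) ^ a * z ^ b * (1 / (z - w)) ^ c)
      (Dbase a b c u w) u := by
  simp only [one_div]
  have h0 : HasDerivAt (fun z : ℂ => 1 + z ^ 2) (2 * u) u := by
    simpa using (hasDerivAt_pow 2 u).const_add 1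
  have hA := (h0.inv h1).pow a
  have hB := hasDerivAt_pow b u
  have hs : HasDerivAt (fun z : ℂ => z - w) 1 u := (hasDerivAt_id u).sub_const w
  have hC := (hs.inv h2).pow c
  exact (hA.mul hB).mul hC

lemma deriv_base (a b c : ℕ) (u w : ℂ) :
    Dbase (a+1) (b+1) (c+1) u w
      = -(2*((a:ℂ)+1))*u * (1/(1+u^2))^(a+2) * u^(b+1) * (1/(u-w))^(c+1)
        + ((b:ℂ)+1) * (1/(1+u^2))^(a+1) * u^b * (1/(u-w))^(c+1)
        - ((c:ℂ)+1) * (1/(1+u^2))^(a+1) * u^(b+1) * (1/(u-w))^(c+2) := by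
  simp only [Dbase, Nat.add_sub_cancel, one_div, div_eq_mul_inv, ← inv_pow]
  push_cast
  ring

lemma per_term (m : ℝ) (u w : ℂ) (hu : u ≠ 0) (a b c : ℕ) :
    (1/(m:ℂ)) * (1 + 1/u^2)⁻¹ *
      ((1/(1+u^2))^(a+1) * u^(b+1) * (1/(u-w))^(c+1) / u + Dbase (a+1) (b+1) (c+1) u w)
    = (1/(2*(m:ℂ))) * ( (2*((b:ℂ)+2)) * ((1/(1+u^2))^(a+2) * u^(b+2) * (1/(u-w))^(c+1))
      + (-(4*((a:ℂ)+1))) * ((1/(1+u^2))^(a+3) * u^(b+4) * (1/(u-w))^(c+1))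
      + (-(2*((c:ℂ)+1))) * ((1/(1+u^2))^(a+2) * u^(b+3) * (1/(u-w))^(c+2)) ) := by
  have hinv : (1 + 1/u^2)⁻¹ = u^2 * (1+u^2)⁻¹ := by
    have h : (1 + 1/u^2) = (1+u^2) * (u^2)⁻¹ := by field_simp; ring
    rw [h, mul_inv, inv_inv, mul_comm]
  have hdiv : (1/(1+u^2))^(a+1) * u^(b+1) * (1/(u-w))^(c+1) / u
      = (1/(1+u^2))^(a+1) * u^b * (1/(u-w))^(c+1) := by
    have h : (1/(1+u^2))^(a+1) * u^(b+1) * (1/(u-w))^(c+1)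
        = ((1/(1+u^2))^(a+1) * u^b * (1/(u-w))^(c+1)) * u := by
      rw [pow_succ (a := u)]; ring
    rw [h, mul_div_cancel_right₀ _ hu]
  rw [deriv_base, hinv, hdiv]
  simp only [one_div, mul_inv, div_eq_mul_inv, ← inv_pow]
  ring

lemma reindex (n : ℕ) (cA cB cC T : ℕ → ℕ → ℂ)
    (hA : ∀ j, cA (n+1) j = 0) (hB : ∀ i, cB i (n+2) = 0)
    (hC1 : ∀ j, cC (n+1) j = 0) (hC2 : ∀ i, cC i (n+2) = 0) :
    ∑ i ∈ range (n+2), ∑ j ∈ range (n+3),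
      ((if 1 ≤ j then cA i (j-1) else 0) + (if 1 ≤ i then cB (i-1) j else 0) + cC i j) * T i j
    = ∑ i ∈ range (n+1), ∑ j ∈ range (n+2),
      (cA i j * T i (j+1) + cB i j * T (i+1) j + cC i j * T i j) := by
  have split : ∀ i j, ((if 1 ≤ j then cA i (j-1) else 0) + (if 1 ≤ i then cB (i-1) j else 0) + cC i j) * T i j
      = (if 1 ≤ j then cA i (j-1) else 0) * T i j + (if 1 ≤ i then cB (i-1) j else 0) * T i j + cC i j * T i j := by
    intro i j; ring
  simp only [split, Finset.sum_add_distrib]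
  have eA : ∑ i ∈ range (n+2), ∑ j ∈ range (n+3), (if 1 ≤ j then cA i (j-1) else 0) * T i j
      = ∑ i ∈ range (n+1), ∑ j ∈ range (n+2), cA i j * T i (j+1) := by
    have inner : ∀ i, ∑ j ∈ range (n+3), (if 1 ≤ j then cA i (j-1) else 0) * T i j
        = ∑ j ∈ range (n+2), cA i j * T i (j+1) := by
      intro i
      rw [Finset.sum_range_succ']
      simp
    simp only [inner]
    rw [Finset.sum_range_succ]
    simp [hA]
  have eB : ∑ i ∈ range (n+2), ∑ j ∈ range (n+3), (if 1 ≤ i then cB (i-1) j else 0) * T i j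
      = ∑ i ∈ range (n+1), ∑ j ∈ range (n+2), cB i j * T (i+1) j := by
    rw [Finset.sum_range_succ']
    simp only [Nat.add_sub_cancel, if_pos (Nat.le_add_left 1 _)]
    have inner : ∀ i, ∑ j ∈ range (n+3), cB i j * T (i+1) j
        = ∑ j ∈ range (n+2), cB i j * T (i+1) j := by
      intro i
      rw [Finset.sum_range_succ, hB, zero_mul, add_zero]
    simp only [inner]
    simp
  have eC : ∑ i ∈ range (n+2), ∑ j ∈ range (n+3), cC i j * T i j
      = ∑ i ∈ range (n+1), ∑ j ∈ range (n+2), cC i j * T i j := by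
    rw [Finset.sum_range_succ]
    have inner : ∀ i, ∑ j ∈ range (n+3), cC i j * T i j
        = ∑ j ∈ range (n+2), cC i j * T i j := by
      intro i
      rw [Finset.sum_range_succ, hC2, zero_mul, add_zero]
    simp only [inner]
    simp [hC1]
  rw [eA, eB, eC]

lemma one_add_sq_ne (u : ℂ) (h1 : u ≠ Complex.I) (h2 : u ≠ -Complex.I) : 1 + u ^ 2 ≠ 0 := by
  intro h
  have hI : Complex.I ^ 2 = -1 := Complex.I_sq
  have h3 : (u - Complex.I) * (u + Complex.I) = 0 := by linear_combination h - hI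
  rcases mul_eq_zero.mp h3 with h4 | h4
  · exact h1 (sub_eq_zero.mp h4)
  · exact h2 (eq_neg_of_add_eq_zero_left h4)

noncomputable def cAf (p : ℕ) (q : ℕ → ℕ → ℂ) (i j : ℕ) : ℂ :=
  2 * ((2*p+i-j+1 : ℕ) : ℂ) * q i j
noncomputable def cBf (p : ℕ) (q : ℕ → ℕ → ℂ) (i j : ℕ) : ℂ :=
  -(4 * ((p+i : ℕ) : ℂ)) * q i j
noncomputable def cCf (p : ℕ) (q : ℕ → ℕ → ℂ) (i j : ℕ) : ℂ :=
  -(2 * ((p+1-i-j : ℕ) : ℂ)) * q i j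
noncomputable def newq (p : ℕ) (q : ℕ → ℕ → ℂ) (i j : ℕ) : ℂ :=
  (if 1 ≤ j then cAf p q i (j-1) else 0) + (if 1 ≤ i then cBf p q (i-1) j else 0) + cCf p q i j

lemma key (p : ℕ) (hp : 1 ≤ p) :
    ∃ q : ℕ → ℕ → ℂ, (∀ i j, p ≤ i ∨ p - i < j → q i j = 0) ∧
      ∀ (m : ℝ), m ≠ 0 → ∀ u w : ℂ,
        u ≠ 0 → u ≠ Complex.I → u ≠ -Complex.I → w ≠ u →
        Qfun m p u w = (1 / (2 * (m:ℂ)))^p *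
          ∑ i ∈ Finset.range (p+1), ∑ j ∈ Finset.range (p+2),
            q i j * ((1/(1+u^2))^(p+i) * u^(2*p+i-j) * (1/(u-w))^(p+1-i-j)) := by
  induction p, hp using Nat.le_induction with
  | base =>
    refine ⟨fun i j => if i = 0 ∧ j = 0 then (-2 : ℂ) else if i = 0 ∧ j = 1 then 2 else 0,
      ?_, ?_⟩
    · intro i j h
      show (if i = 0 ∧ j = 0 then (-2 : ℂ) else if i = 0 ∧ j = 1 then 2 else 0) = 0
      split_ifs with ha hb
      · exfalso; omega
      · exfalso; omega
      · rfl
    · intro m hm u w hu hI hnI hw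
      have h1 : 1 + u ^ 2 ≠ 0 := one_add_sq_ne u hI hnI
      have h2 : u - w ≠ 0 := sub_ne_zero.mpr (Ne.symm hw)
      have hfun : (fun z : ℂ => Qfun m 0 z w) = fun z : ℂ => (z - w)⁻¹ := by
        funext z; simp [Qfun]
      have hQ1 : Qfun m 1 u w = (1 / (m : ℂ)) * (1 + 1 / u ^ 2)⁻¹ *
          (Qfun m 0 u w / u + deriv (fun z => Qfun m 0 z w) u) := rfl
      have hd : deriv (fun z : ℂ => Qfun m 0 z w) u = -1 / (u - w) ^ 2 := by
        rw [hfun]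
        exact (((hasDerivAt_id u).sub_const w).inv h2).deriv
      have hQ0 : Qfun m 0 u w = 1 / (u - w) := rfl
      rw [hQ1, hd, hQ0]
      have goal_eq : ∑ i ∈ Finset.range (1+1), ∑ j ∈ Finset.range (1+2),
          (fun i j => if i = 0 ∧ j = 0 then (-2 : ℂ) else if i = 0 ∧ j = 1 then 2 else 0) i j *
            ((1/(1+u^2))^(1+i) * u^(2*1+i-j) * (1/(u-w))^(1+1-i-j))
          = (-2) * ((1/(1+u^2))^1 * u^2 * (1/(u-w))^2)
            + 2 * ((1/(1+u^2))^1 * u^1 * (1/(u-w))^1) := by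
        norm_num [Finset.sum_range_succ]
      rw [goal_eq]
      have hinv : (1 + 1/u^2)⁻¹ = u^2 * (1+u^2)⁻¹ := by
        have h : (1 + 1/u^2) = (1+u^2) * (u^2)⁻¹ := by field_simp; ring
        rw [h, mul_inv, inv_inv, mul_comm]
      have hcan : u^2 * u⁻¹ = u := by
        rw [pow_two, mul_assoc, mul_inv_cancel₀ hu, mul_one]
      have lhs_eq : 1/(m:ℂ) * (u^2*(1+u^2)⁻¹) * (1/(u-w)/u + -1/(u-w)^2)
          = 1/(m:ℂ) * ((1+u^2)⁻¹ * ((u^2*u⁻¹) * (u-w)⁻¹ - u^2 * ((u-w)⁻¹)^2)) := by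
        simp only [one_div, div_eq_mul_inv, ← inv_pow]; ring
      rw [hinv, lhs_eq, hcan]
      simp only [one_div, div_eq_mul_inv, mul_inv, pow_one]
      ring
  | succ p hp ih =>
    obtain ⟨q, hq, hQ⟩ := ih
    refine ⟨newq p q, ?_, ?_⟩
    · intro i j h
      unfold newq
      have hA0 : (if 1 ≤ j then cAf p q i (j-1) else 0) = 0 := by
        split_ifs with hj
        · unfold cAf; rw [hq i (j-1) (by omega)]; ring
        · rfl
      have hB0 : (if 1 ≤ i then cBf p q (i-1) j else 0) = 0 := by
        split_ifs with hi
        · unfold cBf; rw [hq (i-1) j (by omega)]; ring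
        · rfl
      have hC0 : cCf p q i j = 0 := by
        unfold cCf; rw [hq i j (by omega)]; ring
      rw [hA0, hB0, hC0]; ring
    · intro m hm u w hu hI hnI hw
      have h1 : 1 + u ^ 2 ≠ 0 := one_add_sq_ne u hI hnI
      have h2 : u - w ≠ 0 := sub_ne_zero.mpr (Ne.symm hw)
      show Qfun m (p+1) u w = (1 / (2 * (m:ℂ)))^(p+1) *
          ∑ i ∈ Finset.range (p+2), ∑ j ∈ Finset.range (p+3),
            newq p q i j * ((1/(1+u^2))^(p+1+i) * u^(2*(p+1)+i-j) * (1/(u-w))^(p+1+1-i-j))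
      have hQp : Qfun m (p+1) u w = (1 / (m : ℂ)) * (1 + 1 / u ^ 2)⁻¹ *
          (Qfun m p u w / u + deriv (fun z => Qfun m p z w) u) := rfl
      -- derivative of Qfun m p · w at u
      have hev : (fun z => Qfun m p z w) =ᶠ[nhds u]
          (fun z => (1 / (2 * (m:ℂ)))^p *
            ∑ i ∈ Finset.range (p+1), ∑ j ∈ Finset.range (p+2),
              q i j * ((1/(1+z^2))^(p+i) * z^(2*p+i-j) * (1/(z-w))^(p+1-i-j))) := by
        have hopen : IsOpen {z : ℂ | z ≠ 0 ∧ z ≠ Complex.I ∧ z ≠ -Complex.I ∧ z ≠ w} := by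
          have : {z : ℂ | z ≠ 0 ∧ z ≠ Complex.I ∧ z ≠ -Complex.I ∧ z ≠ w}
              = {z : ℂ | z ≠ 0} ∩ ({z : ℂ | z ≠ Complex.I} ∩ ({z : ℂ | z ≠ -Complex.I} ∩ {z : ℂ | z ≠ w})) := rfl
          rw [this]
          exact isOpen_ne.inter (isOpen_ne.inter (isOpen_ne.inter isOpen_ne))
        filter_upwards [hopen.mem_nhds ⟨hu, hI, hnI, Ne.symm hw⟩] with z hz
        exact hQ m hm z w hz.1 hz.2.1 hz.2.2.1 (Ne.symm hz.2.2.2)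
      have hderivF : HasDerivAt (fun z : ℂ => (1 / (2 * (m:ℂ)))^p *
            ∑ i ∈ Finset.range (p+1), ∑ j ∈ Finset.range (p+2),
              q i j * ((1/(1+z^2))^(p+i) * z^(2*p+i-j) * (1/(z-w))^(p+1-i-j)))
          ((1 / (2 * (m:ℂ)))^p *
            ∑ i ∈ Finset.range (p+1), ∑ j ∈ Finset.range (p+2),
              q i j * Dbase (p+i) (2*p+i-j) (p+1-i-j) u w) u := by
        apply HasDerivAt.const_mul
        apply HasDerivAt.fun_sum
        intro i _
        apply HasDerivAt.fun_sum
        intro j _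
        exact (hasDerivAt_base _ _ _ u w h1 h2).const_mul _
      have hd : deriv (fun z => Qfun m p z w) u = (1 / (2 * (m:ℂ)))^p *
          ∑ i ∈ Finset.range (p+1), ∑ j ∈ Finset.range (p+2),
            q i j * Dbase (p+i) (2*p+i-j) (p+1-i-j) u w := by
        rw [hev.deriv_eq]
        exact hderivF.deriv
      rw [hQp, hQ m hm u w hu hI hnI hw, hd]
      -- pull everything into one double sum
      have step1 : (1 / (m : ℂ)) * (1 + 1 / u ^ 2)⁻¹ *
          (((1 / (2 * (m:ℂ)))^p * ∑ i ∈ Finset.range (p+1), ∑ j ∈ Finset.range (p+2),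
              q i j * ((1/(1+u^2))^(p+i) * u^(2*p+i-j) * (1/(u-w))^(p+1-i-j))) / u
            + (1 / (2 * (m:ℂ)))^p * ∑ i ∈ Finset.range (p+1), ∑ j ∈ Finset.range (p+2),
              q i j * Dbase (p+i) (2*p+i-j) (p+1-i-j) u w)
          = (1 / (2 * (m:ℂ)))^p * ∑ i ∈ Finset.range (p+1), ∑ j ∈ Finset.range (p+2),
              q i j * ((1 / (m : ℂ)) * (1 + 1 / u ^ 2)⁻¹ *
                ((1/(1+u^2))^(p+i) * u^(2*p+i-j) * (1/(u-w))^(p+1-i-j) / u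
                  + Dbase (p+i) (2*p+i-j) (p+1-i-j) u w)) := by
        have expand : ∀ i j, q i j * ((1 / (m : ℂ)) * (1 + 1 / u ^ 2)⁻¹ *
              ((1/(1+u^2))^(p+i) * u^(2*p+i-j) * (1/(u-w))^(p+1-i-j) / u
                + Dbase (p+i) (2*p+i-j) (p+1-i-j) u w))
            = (1 / (m : ℂ)) * (1 + 1 / u ^ 2)⁻¹ *
                (q i j * ((1/(1+u^2))^(p+i) * u^(2*p+i-j) * (1/(u-w))^(p+1-i-j)) / u)
              + (1 / (m : ℂ)) * (1 + 1 / u ^ 2)⁻¹ *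
                (q i j * Dbase (p+i) (2*p+i-j) (p+1-i-j) u w) := by
          intro i j; ring
        simp only [expand, Finset.sum_add_distrib, ← Finset.mul_sum, ← Finset.sum_div]
        ring
      rw [step1]
      -- rewrite each summand via per_term
      have step2 : ∑ i ∈ Finset.range (p+1), ∑ j ∈ Finset.range (p+2),
              q i j * ((1 / (m : ℂ)) * (1 + 1 / u ^ 2)⁻¹ *
                ((1/(1+u^2))^(p+i) * u^(2*p+i-j) * (1/(u-w))^(p+1-i-j) / u
                  + Dbase (p+i) (2*p+i-j) (p+1-i-j) u w))
          = ∑ i ∈ Finset.range (p+1), ∑ j ∈ Finset.range (p+2),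
              (1 / (2 * (m:ℂ))) *
              (cAf p q i j * ((1/(1+u^2))^(p+1+i) * u^(2*(p+1)+i-(j+1)) * (1/(u-w))^(p+1+1-i-(j+1)))
               + cBf p q i j * ((1/(1+u^2))^(p+1+(i+1)) * u^(2*(p+1)+(i+1)-j) * (1/(u-w))^(p+1+1-(i+1)-j))
               + cCf p q i j * ((1/(1+u^2))^(p+1+i) * u^(2*(p+1)+i-j) * (1/(u-w))^(p+1+1-i-j))) := by
        refine Finset.sum_congr rfl (fun i hi => Finset.sum_congr rfl (fun j hj => ?_))
        rw [Finset.mem_range] at hi hj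
        by_cases hqz : q i j = 0
        · simp [hqz, cAf, cBf, cCf]
        · have hij : i < p ∧ j ≤ p - i := by
            by_contra hcon
            exact hqz (hq i j (by omega))
        -- valid range
          obtain ⟨hi', hj'⟩ := hij
          set a := p + i - 1 with ha
          set b := 2*p + i - j - 1 with hb
          set c := p - i - j with hc
          have e1 : p + i = a + 1 := by omega
          have e2 : 2*p + i - j = b + 1 := by omega
          have e3 : p + 1 - i - j = c + 1 := by omega
          have e4 : p + 1 + i = a + 2 := by omega
          have e5 : 2*(p+1) + i - (j+1) = b + 2 := by omega
          have e6 : p + 1 + 1 - i - (j+1) = c + 1 := by omega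
          have e7 : p + 1 + (i+1) = a + 3 := by omega
          have e8 : 2*(p+1) + (i+1) - j = b + 4 := by omega
          have e9 : p + 1 + 1 - (i+1) - j = c + 1 := by omega
          have e10 : 2*(p+1) + i - j = b + 3 := by omega
          have e11 : p + 1 + 1 - i - j = c + 2 := by omega
          unfold cAf cBf cCf
          rw [e1, e2, e3, e4, e5, e6, e7, e8, e9, e10, e11]
          rw [per_term m u w hu a b c]
          push_cast
          ring
      rw [step2]
      have h3 : (∑ i ∈ Finset.range (p+2), ∑ j ∈ Finset.range (p+3),
            newq p q i j * ((1/(1+u^2))^(p+1+i) * u^(2*(p+1)+i-j) * (1/(u-w))^(p+1+1-i-j)))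
          = ∑ i ∈ Finset.range (p+1), ∑ j ∈ Finset.range (p+2),
            (cAf p q i j * ((1/(1+u^2))^(p+1+i) * u^(2*(p+1)+i-(j+1)) * (1/(u-w))^(p+1+1-i-(j+1)))
             + cBf p q i j * ((1/(1+u^2))^(p+1+(i+1)) * u^(2*(p+1)+(i+1)-j) * (1/(u-w))^(p+1+1-(i+1)-j))
             + cCf p q i j * ((1/(1+u^2))^(p+1+i) * u^(2*(p+1)+i-j) * (1/(u-w))^(p+1+1-i-j))) := by
        have hA : ∀ j, cAf p q (p+1) j = 0 := by
          intro j; unfold cAf; rw [hq (p+1) j (by omega)]; ring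
        have hB : ∀ i, cBf p q i (p+2) = 0 := by
          intro i; unfold cBf; rw [hq i (p+2) (by omega)]; ring
        have hC1 : ∀ j, cCf p q (p+1) j = 0 := by
          intro j; unfold cCf; rw [hq (p+1) j (by omega)]; ring
        have hC2 : ∀ i, cCf p q i (p+2) = 0 := by
          intro i; unfold cCf; rw [hq i (p+2) (by omega)]; ring
        have := reindex p (cAf p q) (cBf p q) (cCf p q)
          (fun i j => (1/(1+u^2))^(p+1+i) * u^(2*(p+1)+i-j) * (1/(u-w))^(p+1+1-i-j))
          hA hB hC1 hC2
        simpa only [newq] using this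
      rw [h3]
      simp only [← Finset.mul_sum]
      rw [pow_succ]
      ring

/-- Closed form for `Q_p`, `p ≥ 1`: there exist constants `q_{p,i,j}`
`(0 ≤ i ≤ p-1, 0 ≤ j ≤ p-i)`, independent of `m`, `u` and `w`, such that
`Q_p(u,w) = (2m)^{-p} ∑ᵢ∑ⱼ q_{p,i,j} (1/(1+u²))^{p+i} u^{2p+i-j} (1/(u-w))^{p+1-i-j}`. -/
theorem Qfun_closed_form (p : ℕ) (hp : 1 ≤ p) :
    ∃ q : ℕ → ℕ → ℂ, ∀ (m : ℝ), m ≠ 0 → ∀ u w : ℂ,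
      u ≠ 0 → u ≠ Complex.I → u ≠ -Complex.I → w ≠ u →
      Qfun m p u w = (1 / (2 * (m : ℂ)) ^ p) *
        ∑ i ∈ Finset.range p, ∑ j ∈ Finset.range (p - i + 1),
          q i j * (1 / (1 + u ^ 2)) ^ (p + i) * u ^ (2 * p + i - j) *
            (1 / (u - w)) ^ (p + 1 - i - j) := by
  obtain ⟨q, hq, hQ⟩ := key p hp
  refine ⟨q, ?_⟩
  intro m hm u w hu hI hnI hw
  rw [hQ m hm u w hu hI hnI hw, div_pow, one_pow]
  congr 1
  rw [Finset.sum_range_succ]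
  have hrow : ∑ j ∈ Finset.range (p+2),
      q p j * ((1/(1+u^2))^(p+p) * u^(2*p+p-j) * (1/(u-w))^(p+1-p-j)) = 0 :=
    Finset.sum_eq_zero (fun j _ => by rw [hq p j (Or.inl le_rfl), zero_mul])
  rw [hrow, add_zero]
  refine Finset.sum_congr rfl (fun i hi => ?_)
  rw [Finset.mem_range] at hi
  have hsub : Finset.range (p - i + 1) ⊆ Finset.range (p+2) := by
    intro x hx; rw [Finset.mem_range] at *; omega
  calc ∑ j ∈ Finset.range (p+2),
        q i j * ((1/(1+u^2))^(p+i) * u^(2*p+i-j) * (1/(u-w))^(p+1-i-j))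
      = ∑ j ∈ Finset.range (p+2),
        q i j * (1/(1+u^2))^(p+i) * u^(2*p+i-j) * (1/(u-w))^(p+1-i-j) :=
        Finset.sum_congr rfl (fun j _ => by ring)
    _ = ∑ j ∈ Finset.range (p-i+1),
        q i j * (1/(1+u^2))^(p+i) * u^(2*p+i-j) * (1/(u-w))^(p+1-i-j) := by
        refine (Finset.sum_subset hsub (fun j hj hnj => ?_)).symm
        rw [Finset.mem_range] at hj hnj
        rw [hq i j (Or.inr (by omega))]
        simp
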